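/- Let A be an abelian symmetric monoidal category whose tensor is right-exact, and suppose x is a strongly dualizable ⊗-flat object of A with unit map η_x : 𝟙 → x^∨ ⊗ x. Then x ⊗ ker(η̂_x) = 0, where ker(η̂_x) denotes the kernel of η_x. Consequently, if C is a Serre ⊗-ideal of A containing both x and ker(η_x), then C contains the unit 𝟙, i.e. C = A (if C is an ideal in the strong sense that 𝟙 ∈ C forces C = A). -/

import Mathlib

open CategoryTheory CategoryTheory.Limits CategoryTheory.MonoidalCategory
  CategoryTheory.Pretriangulated

namespace Balmer

universe w v u v₂ u₂ v₃ u₃ v₄ u₄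

variable {C : Type u} [Category.{v} C]

/-- An object is finitely presented if its coYoneda functor preserves filtered colimits. -/
def IsFP (X : C) : Prop :=
  ∀ (J : Type v) [SmallCategory J] [IsFiltered J],
    Nonempty (PreservesColimitsOfShape J (coyoneda.obj (Opposite.op X)))

section Monoidal
variable [MonoidalCategory C]

/-- `n`-fold tensor power of an object. -/
def tpow (x : C) : ℕ → C
  | 0 => 𝟙_ C
  | n + 1 => x ⊗ tpow x n

/-- `n`-fold tensor power of a morphism. -/
def tpowHom {x y : C} (f : x ⟶ y) : ∀ n, tpow x n ⟶ tpow y n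
  | 0 => 𝟙 _
  | n + 1 => f ⊗ₘ tpowHom f n

/-- `n`-fold tensor power of a morphism out of the unit, as a morphism out of the unit. -/
def upow {z : C} (g : 𝟙_ C ⟶ z) : ∀ n, 𝟙_ C ⟶ tpow z n
  | 0 => 𝟙 _
  | n + 1 => (λ_ (𝟙_ C)).inv ≫ (g ⊗ₘ upow g n)

/-- A ⊗-multiplicative class of objects: contains the unit and is closed under `⊗`. -/
def IsTensorMultiplicative (S : Set C) : Prop :=
  𝟙_ C ∈ S ∧ ∀ ⦃a⦄, a ∈ S → ∀ ⦃b⦄, b ∈ S → (a ⊗ b) ∈ S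

end Monoidal

section SerrePlain
variable [Abelian C]

/-- A Serre subcategory (as a class of objects): contains the zeros and is closed under
subobjects, quotients and extensions. -/
def IsSerre (B : Set C) : Prop :=
  (∀ X : C, IsZero X → X ∈ B) ∧
  (∀ ⦃X Y : C⦄ (i : X ⟶ Y), Mono i → Y ∈ B → X ∈ B) ∧
  (∀ ⦃X Y : C⦄ (p : X ⟶ Y), Epi p → X ∈ B → Y ∈ B) ∧
  (∀ S : ShortComplex C, S.ShortExact → S.X₁ ∈ B → S.X₃ ∈ B → S.X₂ ∈ B)

end SerrePlain

section SerrePlain2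
variable [Abelian C]

/-- A Serre subcategory closed under (small) coproducts (no tensor). -/
def IsLocalizingSub (L : Set C) : Prop :=
  IsSerre L ∧ ∀ (J : Type v) (g : J → C) [HasCoproduct g], (∀ j, g j ∈ L) → (∐ g) ∈ L

/-- The localizing subcategory generated by a class of objects (no tensor). -/
def LocSubGen (S : Set C) : Set C :=
  {M | ∀ L : Set C, IsLocalizingSub L → S ⊆ L → M ∈ L}

end SerrePlain2

section Serre
variable [Abelian C] [MonoidalCategory C]

/-- A Serre ⊗-ideal: a Serre subcategory closed under tensoring with arbitrary objects. -/
def IsSerreTensorIdeal (B : Set C) : Prop :=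
  IsSerre B ∧ ∀ (X : C) ⦃M : C⦄, M ∈ B → (X ⊗ M) ∈ B

/-- A maximal proper Serre ⊗-ideal. -/
def IsMaxSerreTensorIdeal (B : Set C) : Prop :=
  IsSerreTensorIdeal B ∧ 𝟙_ C ∉ B ∧
    ∀ B' : Set C, IsSerreTensorIdeal B' → 𝟙_ C ∉ B' → B ⊆ B' → B' = B

/-- The Serre ⊗-ideal generated by a class of objects. -/
def SerreTensorGen (S : Set C) : Set C :=
  {M | ∀ L : Set C, IsSerreTensorIdeal L → S ⊆ L → M ∈ L}

/-- A localizing ⊗-ideal: a Serre ⊗-ideal closed under (small) coproducts. -/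
def IsLocalizingTensorIdeal (L : Set C) : Prop :=
  IsSerreTensorIdeal L ∧
    ∀ (J : Type v) (g : J → C) [HasCoproduct g], (∀ j, g j ∈ L) → (∐ g) ∈ L

/-- The localizing ⊗-ideal generated by a class of objects. -/
def LocTensorGen (S : Set C) : Set C :=
  {M | ∀ L : Set C, IsLocalizingTensorIdeal L → S ⊆ L → M ∈ L}

/-- A Serre ⊗-ideal of the full (abelian, monoidal) subcategory of objects in `P`
(e.g. `P` = finitely presented objects). -/
def IsSerreTensorIdealIn (P B : Set C) : Prop :=
  B ⊆ P ∧
  (∀ X : C, IsZero X → X ∈ P → X ∈ B) ∧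
  (∀ ⦃X Y : C⦄ (i : X ⟶ Y), Mono i → X ∈ P → Y ∈ B → X ∈ B) ∧
  (∀ ⦃X Y : C⦄ (p : X ⟶ Y), Epi p → Y ∈ P → X ∈ B → Y ∈ B) ∧
  (∀ S : ShortComplex C, S.ShortExact → S.X₂ ∈ P → S.X₁ ∈ B → S.X₃ ∈ B → S.X₂ ∈ B) ∧
  (∀ ⦃X : C⦄, X ∈ P → ∀ ⦃M : C⦄, M ∈ B → (X ⊗ M) ∈ B)

/-- A maximal proper Serre ⊗-ideal of the full subcategory of objects in `P`. -/
def IsMaxSerreTensorIdealIn (P B : Set C) : Prop :=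
  IsSerreTensorIdealIn P B ∧ 𝟙_ C ∉ B ∧
    ∀ B' : Set C, IsSerreTensorIdealIn P B' → 𝟙_ C ∉ B' → B ⊆ B' → B' = B

end Serre

section Tri
variable [Preadditive C] [HasZeroObject C] [HasShift C ℤ]
  [∀ n : ℤ, (shiftFunctor C n).Additive] [Pretriangulated C] [MonoidalCategory C]

/-- A thick ⊗-ideal of a tensor-triangulated category. -/
def IsThickTensorIdeal (P : Set C) : Prop :=
  (∀ ⦃x y : C⦄, (x ≅ y) → x ∈ P → y ∈ P) ∧
  (∀ (x : C) (n : ℤ), x ∈ P → (shiftFunctor C n).obj x ∈ P) ∧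
  (∀ T : Triangle C, T ∈ (distTriang C) → T.obj₁ ∈ P → T.obj₂ ∈ P → T.obj₃ ∈ P) ∧
  (∀ x y : C, (∃ (i : x ⟶ y) (r : y ⟶ x), i ≫ r = 𝟙 x) → y ∈ P → x ∈ P) ∧
  (∀ (x : C) ⦃y : C⦄, y ∈ P → (x ⊗ y) ∈ P)

/-- A prime thick ⊗-ideal. -/
def IsPrimeThickTensorIdeal (P : Set C) : Prop :=
  IsThickTensorIdeal P ∧ (∃ x : C, x ∉ P) ∧
    ∀ x y : C, (x ⊗ y) ∈ P → x ∈ P ∨ y ∈ P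

end Tri

/-- For a strongly dualizable ⊗-flat object `x` of an abelian symmetric
monoidal category with right-exact tensor, with unit `η_x : 𝟙 ⟶ x^∨ ⊗ x`, one has
`x ⊗ ker(η_x) = 0`; consequently any Serre ⊗-ideal containing both `x` and `ker(η_x)`
contains the unit `𝟙`. -/
theorem stmt6 {A : Type u} [Category.{v} A] [Abelian A] [MonoidalCategory A]
    [SymmetricCategory A] [MonoidalPreadditive A]
    [∀ X : A, PreservesFiniteColimits (tensorLeft X)]
    (x : A) [HasLeftDual x] (hx : PreservesFiniteLimits (tensorLeft x)) :
    IsZero (x ⊗ kernel (η_ (ᘁx) x)) ∧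
    (∀ B : Set A, IsSerreTensorIdeal B → x ∈ B →
      (kernel (η_ (ᘁx) x) : A) ∈ B → 𝟙_ A ∈ B) := by
  set f := η_ (ᘁx) x with hf
  have h : x ◁ f ≫ (α_ x (ᘁx) x).inv ≫ ε_ (ᘁx) x ▷ x = (ρ_ x).hom ≫ (λ_ x).inv :=
    ExactPairing.coevaluation_evaluation (ᘁx) x
  have hmono : Mono (x ◁ f) := by
    have h2 : Mono ((x ◁ f) ≫ ((α_ x (ᘁx) x).inv ≫ ε_ (ᘁx) x ▷ x)) := by
      rw [h]; infer_instance
    exact mono_of_mono _ ((α_ x (ᘁx) x).inv ≫ ε_ (ᘁx) x ▷ x)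
  constructor
  · have e : (tensorLeft x).obj (kernel f) ≅ kernel ((tensorLeft x).map f) :=
      PreservesKernel.iso (tensorLeft x) f
    have : Mono ((tensorLeft x).map f) := hmono
    exact (isZero_zero A).of_iso (e ≪≫ kernel.ofMono _)
  · intro B hB hxB hkB
    obtain ⟨⟨hzero, hsub, hquot, hext⟩, htensor⟩ := hB
    have hdx : ((ᘁx) ⊗ x) ∈ B := htensor _ hxB
    have hcoim : (Abelian.coimage f : A) ∈ B := by
      have hm : Mono (Abelian.coimageImageComparison f ≫ Abelian.image.ι f) :=
        mono_comp _ _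
      exact hsub _ hm hdx
    let S : ShortComplex A := ShortComplex.mk (kernel.ι f)
      (cokernel.π (kernel.ι f)) (cokernel.condition _)
    have hSE : S.ShortExact :=
      ⟨ShortComplex.exact_of_g_is_cokernel _ (cokernelIsCokernel _)⟩
    exact hext S hSE hkB hcoim
end Balmer
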